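/- Let m < 0 be squarefree and D the ring of integers of ℚ(√m). If p is a rational prime with p < √(−Δ/3) where Δ is the discriminant of ℚ(√m), then there is no element π ∈ D with |N(π)| = p. -/

import Mathlib

set_option maxHeartbeats 1000000 in
/-- For an imaginary quadratic field, no prime below the Gauss bound √(−Δ/3)
is the absolute value of the norm of an algebraic integer. -/
theorem no_small_norm (m : ℤ) (hm : Squarefree m) (hmneg : m < 0)
    (Δ : ℤ) (hΔ : Δ = if m % 4 = 1 then m else 4 * m)
    (K : Type*) [Field K] [NumberField K] (sqm : K) (hsq : sqm ^ 2 = (m : K))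
    (hgen : Algebra.adjoin ℚ {sqm} = ⊤)
    (p : ℕ) (hp : p.Prime) (hsmall : (p : ℝ) < Real.sqrt (-(Δ : ℝ) / 3)) :
    ¬ ∃ π : NumberField.RingOfIntegers K, |Algebra.norm ℚ (π : K)| = (p : ℚ) := by
  rintro ⟨π, hπ⟩
  have hm0 : ((m : ℚ)) < 0 := by exact_mod_cast hmneg
  -- sqm is nonzero
  have hsqm0 : sqm ≠ 0 := by
    intro h
    have h1 : ((m : ℚ) : K) = 0 := by push_cast; rw [← hsq, h]; ring
    have h2 : (m : ℚ) = 0 := by exact_mod_cast h1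
    linarith
  -- sqm is irrational: no rational multiple of sqm equals 1
  have hnotrat : ∀ a : ℚ, a • sqm ≠ 1 := by
    intro a h
    have h1 : (a : K) * sqm = 1 := by rwa [Rat.smul_def] at h
    have h2 : ((a ^ 2 * m : ℚ) : K) = ((1 : ℚ) : K) := by
      push_cast
      calc (a : K) ^ 2 * (m : K) = (a : K) ^ 2 * sqm ^ 2 := by rw [hsq]
        _ = ((a : K) * sqm) ^ 2 := by ring
        _ = 1 := by rw [h1]; ring
    have h3 : a ^ 2 * (m : ℚ) = 1 := by exact_mod_cast h2
    nlinarith [sq_nonneg a]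
  -- linear independence of {1, sqm}
  have hli : LinearIndependent ℚ ![(1 : K), sqm] := by
    rw [linearIndependent_fin2]
    refine ⟨by simpa using hsqm0, fun a ha => hnotrat a (by simpa using ha)⟩
  -- every element is x + y √m
  have hrep : ∀ w : K, ∃ x y : ℚ, w = (x : K) + (y : K) * sqm := by
    intro w
    have hw : w ∈ Algebra.adjoin ℚ {sqm} := by rw [hgen]; trivial
    induction hw using Algebra.adjoin_induction with
    | mem u hu => exact ⟨0, 1, by rw [Set.mem_singleton_iff.mp hu]; push_cast; ring⟩
    | algebraMap r => exact ⟨r, 0, by rw [eq_ratCast]; push_cast; ring⟩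
    | add u v hu hv ihu ihv =>
        obtain ⟨x1, y1, e1⟩ := ihu; obtain ⟨x2, y2, e2⟩ := ihv
        exact ⟨x1 + x2, y1 + y2, by rw [e1, e2]; push_cast; ring⟩
    | mul u v hu hv ihu ihv =>
        obtain ⟨x1, y1, e1⟩ := ihu; obtain ⟨x2, y2, e2⟩ := ihv
        refine ⟨x1 * x2 + m * y1 * y2, x1 * y2 + x2 * y1, ?_⟩
        rw [e1, e2]; push_cast
        linear_combination ((y1 : ℚ) : K) * ((y2 : ℚ) : K) * hsq
  have hspan : ⊤ ≤ Submodule.span ℚ (Set.range ![(1 : K), sqm]) := by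
    intro w _
    obtain ⟨x, y, hw⟩ := hrep w
    have h1 : (1 : K) ∈ Set.range ![(1 : K), sqm] := ⟨0, rfl⟩
    have h2 : sqm ∈ Set.range ![(1 : K), sqm] := ⟨1, rfl⟩
    have hw' : w = x • (1 : K) + y • sqm := by
      rw [hw, Rat.smul_def, Rat.smul_def, mul_one]
    rw [hw']
    exact Submodule.add_mem _ (Submodule.smul_mem _ _ (Submodule.subset_span h1))
      (Submodule.smul_mem _ _ (Submodule.subset_span h2))
  let B : Module.Basis (Fin 2) ℚ K := Module.Basis.mk hli hspan
  have hB0 : B 0 = 1 := by simp [B, Module.Basis.mk_apply]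
  have hB1 : B 1 = sqm := by simp [B, Module.Basis.mk_apply]
  have hBrepr : ∀ (u v : ℚ) (i : Fin 2), B.repr ((u : K) + (v : K) * sqm) i = ![u, v] i := by
    intro u v i
    have h01 : (u : K) + (v : K) * sqm = u • B 0 + v • B 1 := by
      rw [hB0, hB1, Rat.smul_def, Rat.smul_def, mul_one]
    rw [h01, map_add, map_smul, map_smul, B.repr_self, B.repr_self]
    fin_cases i <;> simp
  obtain ⟨x, y, hz⟩ := hrep (π : K)
  have e0 : (π : K) * B 0 = (x : K) + (y : K) * sqm := by rw [hB0, mul_one, hz]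
  have e1 : (π : K) * B 1 = ((m * y : ℚ) : K) + (x : K) * sqm := by
    rw [hB1, hz]; push_cast
    linear_combination ((y : ℚ) : K) * hsq
  have hnorm : Algebra.norm ℚ (π : K) = x ^ 2 - m * y ^ 2 := by
    rw [Algebra.norm_eq_matrix_det B, Matrix.det_fin_two]
    rw [Algebra.leftMulMatrix_eq_repr_mul, Algebra.leftMulMatrix_eq_repr_mul,
      Algebra.leftMulMatrix_eq_repr_mul, Algebra.leftMulMatrix_eq_repr_mul,
      e0, e1, hBrepr, hBrepr, hBrepr, hBrepr]
    simp; ring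
  have htr : Algebra.trace ℚ K (π : K) = 2 * x := by
    rw [Algebra.trace_eq_matrix_trace B, Matrix.trace_fin_two]
    rw [Algebra.leftMulMatrix_eq_repr_mul, Algebra.leftMulMatrix_eq_repr_mul,
      e0, e1, hBrepr, hBrepr]
    simp; ring
  -- the trace is an integer
  have hint : IsIntegral ℤ ((π : K)) := NumberField.RingOfIntegers.isIntegral_coe π
  have htrint : IsIntegral ℤ ((2 * x : ℚ)) := htr ▸ Algebra.isIntegral_trace hint
  obtain ⟨a, ha⟩ := IsIntegrallyClosed.isIntegral_iff.mp htrint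
  have ha' : ((a : ℚ)) = 2 * x := by rw [← ha]; simp
  -- the norm equals p
  have hnn : (0 : ℚ) ≤ x ^ 2 - m * y ^ 2 := by nlinarith [sq_nonneg x, sq_nonneg y]
  have hnp : x ^ 2 - (m : ℚ) * y ^ 2 = p := by
    rw [hnorm, abs_of_nonneg hnn] at hπ; exact hπ
  -- 2y is an integer since m is squarefree
  set q : ℚ := 2 * y with hqdef
  have hq : (m : ℚ) * q ^ 2 = (a : ℚ) ^ 2 - 4 * p := by
    rw [hqdef]
    linear_combination (-((a : ℚ) + 2 * x)) * ha' + (-4) * hnp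
  have hden : ((q.den : ℚ)) ≠ 0 := by exact_mod_cast q.den_nz
  have h1 : ((q.num : ℚ)) = q * (q.den : ℚ) := by
    have h1' := Rat.num_div_den q
    rwa [div_eq_iff hden] at h1'
  have hZ : m * q.num ^ 2 = (a ^ 2 - 4 * (p : ℤ)) * (q.den : ℤ) ^ 2 := by
    have : (m : ℚ) * (q.num : ℚ) ^ 2 = ((a : ℚ) ^ 2 - 4 * p) * (q.den : ℚ) ^ 2 := by
      rw [h1]; linear_combination ((q.den : ℚ)) ^ 2 * hq
    exact_mod_cast this
  have hcop : IsCoprime ((q.den : ℤ)) q.num := by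
    rw [Int.isCoprime_iff_gcd_eq_one, Int.gcd_comm]
    simpa [Int.gcd] using q.reduced
  have hd2 : ((q.den : ℤ)) ^ 2 ∣ m * q.num ^ 2 :=
    ⟨a ^ 2 - 4 * (p : ℤ), by linear_combination hZ⟩
  have hdvd : ((q.den : ℤ)) ^ 2 ∣ m := (hcop.pow).dvd_of_dvd_mul_right hd2
  have hden1 : q.den = 1 := by
    have hu : IsUnit ((q.den : ℤ)) := hm _ (by rwa [← pow_two])
    have hpos := q.pos
    rcases Int.isUnit_iff.mp hu with h | h <;> omega
  set b : ℤ := q.num with hbdef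
  have hbq : ((b : ℚ)) = 2 * y := by rw [hbdef, h1, hden1, hqdef]; push_cast; ring
  -- the key integer equation: 4p = a² - m b²
  have h4p : (4 * (p : ℤ) : ℚ) = ((a ^ 2 - m * b ^ 2 : ℤ) : ℚ) := by
    push_cast
    rw [ha', hbq]
    linear_combination (-4) * hnp
  have h4pZ : 4 * (p : ℤ) = a ^ 2 - m * b ^ 2 := by exact_mod_cast h4p
  -- the size bound
  have hΔneg : (0 : ℝ) < -(Δ : ℝ) / 3 := by
    rcases lt_trichotomy ((0:ℝ)) (-(Δ : ℝ) / 3) with h | h | h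
    · exact h
    · rw [← h, Real.sqrt_zero] at hsmall
      exact absurd hsmall (not_lt.mpr (by positivity))
    · rw [Real.sqrt_eq_zero_of_nonpos (le_of_lt h)] at hsmall
      exact absurd hsmall (not_lt.mpr (by positivity))
  have hΔlt : 3 * (p : ℤ) ^ 2 < -Δ := by
    have h2 : ((p : ℝ)) ^ 2 < -(Δ : ℝ) / 3 := (Real.lt_sqrt (by positivity)).mp hsmall
    have h3 : 3 * ((p : ℝ)) ^ 2 < -(Δ : ℝ) := by linarith
    exact_mod_cast h3
  have hp2 : (2 : ℤ) ≤ (p : ℤ) := by exact_mod_cast hp.two_le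
  rcases eq_or_ne b 0 with hb | hb
  · -- b = 0 : then p = (a/2)² is a perfect square, contradiction
    have ha2 : a ^ 2 = 4 * (p : ℤ) := by rw [h4pZ, hb]; ring
    have h2a : (2 : ℤ) ∣ a :=
      Int.prime_two.dvd_of_dvd_pow (n := 2) ⟨2 * (p : ℤ), by linarith⟩
    obtain ⟨c, hc⟩ := h2a
    have hcp : (p : ℤ) = c * c := by
      have h4c : a ^ 2 = 4 * (c * c) := by rw [hc]; ring
      linarith
    have hpZ : Prime ((p : ℤ)) := Nat.prime_iff_prime_int.mp hp
    have := hpZ.irreducible.isUnit_or_isUnit hcp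
    have hcu : IsUnit c := by tauto
    rcases Int.isUnit_iff.mp hcu with h | h <;> rw [h] at hcp <;> omega
  · -- b ≠ 0
    have hb1 : 1 ≤ b ^ 2 := by rcases hb.lt_or_gt with h | h <;> nlinarith
    by_cases hcase : m % 4 = 1
    · -- Δ = m
      have hΔm : Δ = m := by rw [hΔ, if_pos hcase]
      rw [hΔm] at hΔlt
      have hmn : (0 : ℤ) ≤ -m := by nlinarith [sq_nonneg ((p:ℤ))]
      have hkey : (0 : ℤ) ≤ (-m) * (b ^ 2 - 1) := mul_nonneg hmn (by linarith)
      nlinarith [sq_nonneg a, mul_nonneg (by linarith : (0:ℤ) ≤ (p:ℤ)) (by linarith : (0:ℤ) ≤ (p:ℤ) - 2)]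
    · -- Δ = 4m ; show a, b are both even
      have hΔm : Δ = 4 * m := by rw [hΔ, if_neg hcase]
      rw [hΔm] at hΔlt
      have h4m : ¬ (4 : ℤ) ∣ m := by
        intro h
        have := hm 2 (by rw [show (2 * 2 : ℤ) = 4 by norm_num]; exact h)
        rw [Int.isUnit_iff] at this
        omega
      rcases Int.even_or_odd a with ⟨s, hs⟩ | ⟨s, hs⟩ <;>
        rcases Int.even_or_odd b with ⟨t, ht⟩ | ⟨t, ht⟩
      · -- both even : the real case
        have htne : t ≠ 0 := by omega
        have ht1 : 1 ≤ t ^ 2 := by rcases htne.lt_or_gt with h | h <;> nlinarith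
        have hps : (p : ℤ) = s ^ 2 - m * t ^ 2 := by
          rw [hs, ht] at h4pZ; linarith [h4pZ, sq_nonneg s]
        have hmn : (0 : ℤ) ≤ -m := by nlinarith [sq_nonneg ((p:ℤ))]
        have hkey : (0 : ℤ) ≤ (-m) * (t ^ 2 - 1) := mul_nonneg hmn (by linarith)
        nlinarith [sq_nonneg s, mul_nonneg (by linarith : (0:ℤ) ≤ (p:ℤ)) (by linarith : (0:ℤ) ≤ (p:ℤ) - 2)]
      · -- a even, b odd : 4 ∣ m, contradiction
        have : m = 4 * (s ^ 2 - m * t ^ 2 - m * t - (p : ℤ)) := by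
          rw [hs, ht] at h4pZ; linear_combination h4pZ
        exact h4m ⟨_, this⟩
      · -- a odd, b even : 4 ∣ 1, contradiction
        have : (1 : ℤ) = 4 * ((p : ℤ) - s ^ 2 - s + m * t ^ 2) := by
          rw [hs, ht] at h4pZ; linear_combination -h4pZ
        omega
      · -- both odd : m ≡ 1 mod 4, contradiction
        have : m = 4 * (s ^ 2 + s - m * t ^ 2 - m * t - (p : ℤ)) + 1 := by
          rw [hs, ht] at h4pZ; linear_combination h4pZ
        omega
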